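/- For x > 0, α, τ ∈ ℝ and δ ∈ [0, π/2), one has |Re K_{α+iτ}(x)| ≤ e^{-δ|τ|} K_α(x cos δ). -/

import Mathlib

open MeasureTheory

/-- `Re K_{α+iτ}(x) = ∫_0^∞ e^{-x cosh u} cosh(α u) cos(τ u) du`. -/
noncomputable def ReK (α τ x : ℝ) : ℝ :=
  ∫ u in Set.Ioi (0:ℝ), Real.exp (-(x * Real.cosh u)) * Real.cosh (α * u) * Real.cos (τ * u)

/-- `K_α(y) = ∫_0^∞ e^{-y cosh u} cosh(α u) du` (real-valued for real `α`). -/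
noncomputable def Kreal (α y : ℝ) : ℝ :=
  ∫ u in Set.Ioi (0:ℝ), Real.exp (-(y * Real.cosh u)) * Real.cosh (α * u)

open Filter Complex Set

noncomputable def Fc (x α τ : ℝ) : ℂ → ℂ := fun z =>
  Complex.exp (-(x * Complex.cosh z)) * Complex.cosh (α * z) * Complex.exp (τ * Complex.I * z)

lemma cosh_re' (u t : ℝ) : (Complex.cosh (u + t*Complex.I)).re = Real.cosh u * Real.cos t := by
  simp [Complex.cosh, Complex.exp_re, Complex.div_re, Real.cosh_eq]
  ring

lemma norm_cosh_le (w : ℂ) : ‖Complex.cosh w‖ ≤ Real.cosh w.re := by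
  rw [Complex.cosh, Real.cosh_eq]
  calc ‖(Complex.exp w + Complex.exp (-w))/2‖ ≤ (‖Complex.exp w‖ + ‖Complex.exp (-w)‖)/2 := by
        rw [norm_div, Complex.norm_ofNat]; gcongr; exact norm_add_le _ _
    _ = (Real.exp w.re + Real.exp (-w.re))/2 := by simp [Complex.norm_exp]

lemma norm_Fc_le (x α τ u t : ℝ) :
    ‖Fc x α τ (u + t*Complex.I)‖ ≤
      Real.exp (-(x * Real.cos t * Real.cosh u)) * Real.cosh (α*u) * Real.exp (-(τ*t)) := by
  rw [Fc, norm_mul, norm_mul]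
  gcongr
  · rw [Complex.norm_exp]
    apply le_of_eq; congr 1
    simp [cosh_re', Complex.mul_re]
    ring
  · calc ‖Complex.cosh (α * (u + t*Complex.I))‖ ≤ Real.cosh ((α * ((u:ℂ) + t*Complex.I)).re) :=
          norm_cosh_le _
      _ = Real.cosh (α*u) := by norm_num [Complex.mul_re]
  · rw [Complex.norm_exp]
    apply le_of_eq; congr 1
    simp [Complex.mul_re]

lemma cosh_le_exp_abs (t : ℝ) : Real.cosh t ≤ Real.exp |t| := by
  rw [Real.cosh_eq]
  have h1 : Real.exp t ≤ Real.exp |t| := Real.exp_le_exp.2 (le_abs_self t)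
  have h2 : Real.exp (-t) ≤ Real.exp |t| := Real.exp_le_exp.2 (neg_le_abs t)
  linarith

lemma ev_bound (y α : ℝ) (hy : 0 < y) :
    ∀ᶠ u in atTop, Real.exp (-(y*Real.cosh u)) * Real.cosh (α*u) ≤ Real.exp (-u) := by
  have h1 : Tendsto (fun u : ℝ => Real.exp u / u) atTop atTop := by
    simpa using Real.tendsto_exp_div_pow_atTop 1
  filter_upwards [h1.eventually_ge_atTop (2*(|α|+1)/y), eventually_gt_atTop 0] with u h hu
  have hcosh : Real.cosh (α*u) ≤ Real.exp (|α| * u) := by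
    calc Real.cosh (α*u) ≤ Real.exp (|α * u|) := cosh_le_exp_abs _
      _ = Real.exp (|α| * u) := by rw [abs_mul, abs_of_pos hu]
  have hkey : (|α|+1)*u ≤ y * Real.cosh u := by
    have h4 : Real.exp u / 2 ≤ Real.cosh u := by
      rw [Real.cosh_eq]; have := (Real.exp_pos (-u)).le; linarith
    have h5 : 2*(|α|+1)*u ≤ Real.exp u * y := (div_le_div_iff₀ hy hu).mp h
    nlinarith [h4, Real.exp_pos u, abs_nonneg α]
  calc Real.exp (-(y*Real.cosh u)) * Real.cosh (α*u)
      ≤ Real.exp (-(y*Real.cosh u)) * Real.exp (|α| * u) := by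
        exact mul_le_mul_of_nonneg_left hcosh (Real.exp_pos _).le
    _ = Real.exp (|α| * u - y*Real.cosh u) := by rw [← Real.exp_add]; ring_nf
    _ ≤ Real.exp (-u) := Real.exp_le_exp.2 (by nlinarith [hkey, hu])

lemma integrable_K (α y : ℝ) (hy : 0 < y) :
    IntegrableOn (fun u => Real.exp (-(y*Real.cosh u)) * Real.cosh (α*u)) (Set.Ioi 0) := by
  apply integrable_of_isBigO_exp_neg (b := 1) one_pos
  · fun_prop
  · apply Asymptotics.IsBigO.of_bound 1
    filter_upwards [ev_bound y α hy] with u h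
    have hnn : 0 ≤ Real.exp (-(y*Real.cosh u)) * Real.cosh (α*u) :=
      mul_nonneg (Real.exp_pos _).le (Real.cosh_pos _).le
    rw [Real.norm_eq_abs, Real.norm_eq_abs, _root_.abs_of_nonneg hnn,
      _root_.abs_of_nonneg (Real.exp_pos _).le, one_mul, neg_one_mul]
    exact h

lemma tendsto_K_zero (α y : ℝ) (hy : 0 < y) :
    Tendsto (fun u => Real.exp (-(y*Real.cosh u)) * Real.cosh (α*u)) atTop (nhds 0) := by
  apply squeeze_zero' (g := fun u => Real.exp (-u))
  · filter_upwards with u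
    exact mul_nonneg (Real.exp_pos _).le (Real.cosh_pos _).le
  · exact ev_bound y α hy
  · exact Real.tendsto_exp_atBot.comp tendsto_neg_atTop_atBot

lemma Fc_cont (x α τ : ℝ) : Continuous (Fc x α τ) := by
  unfold Fc; fun_prop

lemma Fc_diff (x α τ : ℝ) : Differentiable ℂ (Fc x α τ) := by
  unfold Fc; fun_prop

lemma integrable_Fc_shift (x α τ δ : ℝ) (h : 0 < x * Real.cos δ) (hτδ : 0 ≤ τ*δ) :
    IntegrableOn (fun u : ℝ => Fc x α τ (u + δ*Complex.I)) (Set.Ioi 0) := by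
  apply Integrable.mono' (integrable_K α (x*Real.cos δ) h)
  · exact ((Fc_cont x α τ).comp (by fun_prop : Continuous fun u : ℝ =>
      (u : ℂ) + δ*Complex.I)).aestronglyMeasurable
  · filter_upwards with u
    calc ‖Fc x α τ (↑u + ↑δ*Complex.I)‖
        ≤ Real.exp (-(x*Real.cos δ*Real.cosh u)) * Real.cosh (α*u) * Real.exp (-(τ*δ)) :=
          norm_Fc_le x α τ u δ
      _ ≤ Real.exp (-(x*Real.cos δ*Real.cosh u)) * Real.cosh (α*u) * 1 := by
          gcongr
          exact Real.exp_le_one_iff.2 (by linarith)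
      _ = Real.exp (-(x*Real.cos δ*Real.cosh u)) * Real.cosh (α*u) := by ring

lemma integrable_Fc_real (x α τ : ℝ) (hx : 0 < x) :
    IntegrableOn (fun u : ℝ => Fc x α τ u) (Set.Ioi 0) := by
  have h := integrable_Fc_shift x α τ 0 (by simpa using hx) (by simp)
  simpa using h

lemma Fc_re (x α τ u : ℝ) :
    (Fc x α τ u).re = Real.exp (-(x*Real.cosh u)) * Real.cosh (α*u) * Real.cos (τ*u) := by
  have h : Fc x α τ u = ((Real.exp (-(x*Real.cosh u)) * Real.cosh (α*u) : ℝ) : ℂ) *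
      Complex.exp ((τ*u : ℝ) * Complex.I) := by
    rw [Fc]
    push_cast
    ring_nf
  rw [h, Complex.re_ofReal_mul, Complex.exp_ofReal_mul_I_re]

lemma Fc_I (x α τ t : ℝ) :
    Fc x α τ (t*Complex.I) =
      ((Real.exp (-(x*Real.cos t)) * Real.cos (α*t) * Real.exp (-(τ*t)) : ℝ) : ℂ) := by
  rw [Fc]
  have h1 : Complex.cosh ((t:ℂ)*Complex.I) = ((Real.cos t : ℝ) : ℂ) := by
    rw [Complex.cosh_mul_I, Complex.ofReal_cos]
  have h2 : (α:ℂ) * ((t:ℂ)*Complex.I) = ((α*t : ℝ):ℂ)*Complex.I := by push_cast; ring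
  have h3 : (τ:ℂ)*Complex.I*((t:ℂ)*Complex.I) = ((-(τ*t) : ℝ) : ℂ) := by
    push_cast
    rw [mul_assoc, mul_comm Complex.I ((t:ℂ)*Complex.I), mul_assoc, Complex.I_mul_I]
    ring
  rw [h1, h2, h3, Complex.cosh_mul_I]
  norm_cast

lemma contour (x α τ δ : ℝ) (hx : 0 < x) (hτ : 0 ≤ τ) (hδ0 : 0 ≤ δ) (hδlt : δ < Real.pi/2) :
    ∫ u in Set.Ioi (0:ℝ), Fc x α τ u =
      (∫ u in Set.Ioi (0:ℝ), Fc x α τ (u + δ*Complex.I)) +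
        Complex.I • ∫ t in (0:ℝ)..δ, Fc x α τ (t*Complex.I) := by
  have hcos : 0 < Real.cos δ := Real.cos_pos_of_mem_Ioo
    ⟨by linarith [Real.pi_pos], hδlt⟩
  have hxc : 0 < x * Real.cos δ := mul_pos hx hcos
  have hA := intervalIntegral_tendsto_integral_Ioi 0 (integrable_Fc_real x α τ hx) tendsto_id
  have hB := intervalIntegral_tendsto_integral_Ioi 0
    (integrable_Fc_shift x α τ δ hxc (mul_nonneg hτ hδ0)) tendsto_id
  have hC : Tendsto (fun R : ℝ => Complex.I • ∫ t in (0:ℝ)..δ, Fc x α τ (R + t*Complex.I))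
      atTop (nhds 0) := by
    have hbnd : ∀ R : ℝ, ‖Complex.I • ∫ t in (0:ℝ)..δ, Fc x α τ (R + t*Complex.I)‖ ≤
        Real.exp (-(x*Real.cos δ*Real.cosh R)) * Real.cosh (α*R) * |δ - 0| := by
      intro R
      rw [norm_smul, Complex.norm_I, one_mul]
      apply intervalIntegral.norm_integral_le_of_norm_le_const
      intro t ht
      rw [Set.uIoc_of_le hδ0] at ht
      have ht1 : 0 < t := ht.1
      have ht2 : t ≤ δ := ht.2
      calc ‖Fc x α τ (↑R + ↑t*Complex.I)‖
          ≤ Real.exp (-(x*Real.cos t*Real.cosh R)) * Real.cosh (α*R) * Real.exp (-(τ*t)) :=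
            norm_Fc_le x α τ R t
        _ ≤ Real.exp (-(x*Real.cos δ*Real.cosh R)) * Real.cosh (α*R) * 1 := by
            gcongr
            · have hcc : Real.cos δ ≤ Real.cos t :=
                Real.cos_le_cos_of_nonneg_of_le_pi ht1.le (by linarith [Real.pi_pos]) ht2
              have := Real.cosh_pos R
              nlinarith
            · exact Real.exp_le_one_iff.2 (by nlinarith)
        _ = Real.exp (-(x*Real.cos δ*Real.cosh R)) * Real.cosh (α*R) := by ring
    refine squeeze_zero_norm hbnd ?_
    have h0 := (tendsto_K_zero α (x*Real.cos δ) hxc).mul_const |δ - 0|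
    simpa [mul_assoc] using h0
  have hrect : ∀ R : ℝ, (∫ u in (0:ℝ)..R, Fc x α τ u) =
      (∫ u in (0:ℝ)..R, Fc x α τ (u + δ*Complex.I))
      - (Complex.I • ∫ t in (0:ℝ)..δ, Fc x α τ (R + t*Complex.I))
      + Complex.I • ∫ t in (0:ℝ)..δ, Fc x α τ (t*Complex.I) := by
    intro R
    have h := Complex.integral_boundary_rect_eq_zero_of_differentiableOn (Fc x α τ) 0
      (R + δ*Complex.I) (Fc_diff x α τ).differentiableOn
    simp only [Complex.zero_re, Complex.zero_im, Complex.add_re, Complex.add_im,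
      Complex.ofReal_re, Complex.ofReal_im, Complex.mul_re, Complex.mul_im,
      Complex.I_re, Complex.I_im, mul_zero, mul_one, zero_mul, sub_zero, zero_sub,
      zero_add, add_zero, neg_zero, Complex.ofReal_zero] at h
    simp only [smul_eq_mul] at h ⊢
    linear_combination h
  have hlim : Tendsto (fun R : ℝ =>
      (∫ u in (0:ℝ)..R, Fc x α τ (u + δ*Complex.I))
      - (Complex.I • ∫ t in (0:ℝ)..δ, Fc x α τ (R + t*Complex.I))
      + Complex.I • ∫ t in (0:ℝ)..δ, Fc x α τ (t*Complex.I)) atTop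
      (nhds ((∫ u in Set.Ioi (0:ℝ), Fc x α τ (u + δ*Complex.I)) - 0 +
        Complex.I • ∫ t in (0:ℝ)..δ, Fc x α τ (t*Complex.I))) :=
    (hB.sub hC).add tendsto_const_nhds
  have := tendsto_nhds_unique hA (hlim.congr (fun R => (hrect R).symm))
  simpa [sub_zero] using this

/-- `|Re K_{α+iτ}(x)| ≤ e^{-δ|τ|} K_α(x cos δ)` for `δ ∈ [0, π/2)`. -/
theorem re_besselK_bound (x : ℝ) (hx : 0 < x) (α τ δ : ℝ)
    (hδ : δ ∈ Set.Ico 0 (Real.pi / 2)) :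
    |ReK α τ x| ≤ Real.exp (-(δ * |τ|)) * Kreal α (x * Real.cos δ) := by
  obtain ⟨hδ0, hδlt⟩ := hδ
  have hcos : 0 < Real.cos δ := Real.cos_pos_of_mem_Ioo ⟨by linarith [Real.pi_pos], hδlt⟩
  have hxc : 0 < x * Real.cos δ := mul_pos hx hcos
  have habs : ReK α τ x = ReK α |τ| x := by
    unfold ReK
    refine setIntegral_congr_fun measurableSet_Ioi fun u hu => ?_
    have h : |τ| * u = |τ * u| := by rw [abs_mul, abs_of_pos (show (0:ℝ) < u from hu)]
    rw [h, Real.cos_abs]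
  rw [habs]
  set σ := |τ| with hσ
  have hσ0 : 0 ≤ σ := abs_nonneg τ
  have hint1 := integrable_Fc_real x α σ hx
  have hre : ReK α σ x = (∫ u in Set.Ioi (0:ℝ), Fc x α σ u).re := by
    rw [ReK, ← RCLike.re_eq_complex_re, ← integral_re hint1]
    refine setIntegral_congr_fun measurableSet_Ioi fun u _ => ?_
    rw [RCLike.re_eq_complex_re, Fc_re]
  rw [hre, contour x α σ δ hx hσ0 hδ0 hδlt]
  have hD : (Complex.I • ∫ t in (0:ℝ)..δ, Fc x α σ (t*Complex.I)).re = 0 := by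
    have h : (∫ t in (0:ℝ)..δ, Fc x α σ (t*Complex.I)) =
        ((∫ t in (0:ℝ)..δ, Real.exp (-(x*Real.cos t)) * Real.cos (α*t) * Real.exp (-(σ*t)) : ℝ) : ℂ) := by
      rw [← intervalIntegral.integral_ofReal]
      exact intervalIntegral.integral_congr fun t _ => Fc_I x α σ t
    rw [h]
    simp [smul_eq_mul]
  rw [Complex.add_re, hD, add_zero]
  calc |(∫ u in Set.Ioi (0:ℝ), Fc x α σ (u + δ*Complex.I)).re|
      ≤ ‖∫ u in Set.Ioi (0:ℝ), Fc x α σ (u + δ*Complex.I)‖ := by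
        exact Complex.abs_re_le_norm _
    _ ≤ ∫ u in Set.Ioi (0:ℝ),
          Real.exp (-(δ*σ)) * (Real.exp (-(x*Real.cos δ*Real.cosh u)) * Real.cosh (α*u)) := by
        apply norm_integral_le_of_norm_le ((integrable_K α (x*Real.cos δ) hxc).const_mul _)
        filter_upwards with u
        calc ‖Fc x α σ (↑u + ↑δ*Complex.I)‖
            ≤ Real.exp (-(x*Real.cos δ*Real.cosh u)) * Real.cosh (α*u) * Real.exp (-(σ*δ)) :=
              norm_Fc_le x α σ u δ
          _ = Real.exp (-(δ*σ)) * (Real.exp (-(x*Real.cos δ*Real.cosh u)) * Real.cosh (α*u)) := by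
              rw [mul_comm σ δ]; ring
    _ = Real.exp (-(δ*σ)) * Kreal α (x * Real.cos δ) := by
        rw [Kreal, integral_const_mul]
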